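/- If 0 < λ_1 ≤ λ_2 ≤ ... ≤ λ_m are real numbers, then for each k with 0 ≤ k ≤ m, the product λ_{m-k+1}λ_{m-k+2}⋯λ_m · E_k is at least E_k^{(2)}, where E_k is the k-th elementary symmetric function of λ_1,...,λ_m and E_k^{(2)} is the k-th elementary symmetric function of λ_1²,...,λ_m². -/

import Mathlib

open Finset

/-- The `k`-th elementary symmetric function of `l 0, ..., l (m-1)`. -/
def esymmVal (m : ℕ) (l : Fin m → ℝ) (k : ℕ) : ℝ :=
  ∑ s ∈ Finset.powersetCard k (Finset.univ : Finset (Fin m)), ∏ i ∈ s, l i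

/-- The product of the top `k` values `l (m-k) ⋯ l (m-1)`. -/
def topProd (m : ℕ) (l : Fin m → ℝ) (k : ℕ) : ℝ :=
  ∏ i ∈ Finset.univ.filter (fun i : Fin m => m - k ≤ (i : ℕ)), l i

lemma strictMono_nat_le {k : ℕ} {g : Fin k → ℕ} (hg : StrictMono g) :
    ∀ j : Fin k, (j : ℕ) ≤ g j := by
  suffices h : ∀ n (hn : n < k), n ≤ g ⟨n, hn⟩ by
    intro j; simpa using h j.1 j.2
  intro n
  induction n with
  | zero => intro _; exact Nat.zero_le _
  | succ n ih =>
    intro hn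
    have h1 := ih (by omega)
    have h2 : g ⟨n, by omega⟩ < g ⟨n + 1, hn⟩ := hg (by simp [Fin.lt_def])
    omega

lemma orderEmb_le {m k : ℕ} (hk : k ≤ m) (s : Finset (Fin m)) (hs : s.card = k)
    (j : Fin k) : ((s.orderEmbOfFin hs j : Fin m) : ℕ) ≤ m - k + j := by
  set f := s.orderEmbOfFin hs
  have hfm : StrictMono f := f.strictMono
  have hlt : ∀ a : Fin k, ((f a : Fin m) : ℕ) < m := fun a => (f a).2
  set g : Fin k → ℕ := fun a => m - 1 - ((f a.rev : Fin m) : ℕ) with hg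
  have hgm : StrictMono g := by
    intro a b hab
    have h1 : b.rev < a.rev := Fin.rev_lt_rev.mpr hab
    have h2 : f b.rev < f a.rev := hfm h1
    have h3 := hlt a.rev
    have h4 := hlt b.rev
    simp only [hg]
    have := (Fin.lt_iff_val_lt_val).mp h2
    omega
  have := strictMono_nat_le hgm j.rev
  have hrev : (j.rev : ℕ) = k - 1 - (j : ℕ) := by
    simp [Fin.rev]; omega
  have hrr : j.rev.rev = j := Fin.rev_rev j
  simp only [hg] at this
  rw [hrr] at this
  have h3 := hlt j
  have hj := j.2
  omega

lemma prod_le_topProd {m k : ℕ} (hk : k ≤ m) (l : Fin m → ℝ) (hl : ∀ i, 0 < l i)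
    (hmono : Monotone l) (s : Finset (Fin m)) (hs : s.card = k) :
    ∏ i ∈ s, l i ≤ topProd m l k := by
  have e2 : Fin k → Fin m := fun j => ⟨m - k + j, by omega⟩
  have hs_eq : ∏ i ∈ s, l i = ∏ j : Fin k, l (s.orderEmbOfFin hs j) := by
    rw [← Finset.prod_coe_sort s l]
    exact (Fintype.prod_equiv (s.orderIsoOfFin hs).toEquiv _ _ (fun j => by
      simp [Finset.coe_orderIsoOfFin_apply])).symm
  have htop : topProd m l k = ∏ j : Fin k, l ⟨m - k + j, by omega⟩ := by
    rw [topProd]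
    rw [show Finset.univ.filter (fun i : Fin m => m - k ≤ (i : ℕ)) =
        Finset.image (fun j : Fin k => (⟨m - k + j, by omega⟩ : Fin m)) Finset.univ from ?_]
    · rw [Finset.prod_image]
      intro a _ b _ hab
      have : m - k + (a : ℕ) = m - k + (b : ℕ) := congrArg Fin.val hab
      exact Fin.ext (by omega)
    · ext i
      simp only [Finset.mem_filter, Finset.mem_univ, true_and, Finset.mem_image]
      constructor
      · intro hi
        exact ⟨⟨(i : ℕ) - (m - k), by omega⟩, Fin.ext (by simp; omega)⟩
      · rintro ⟨j, rfl⟩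
        simp
  rw [hs_eq, htop]
  apply Finset.prod_le_prod
  · intro j _; exact (hl _).le
  · intro j _
    apply hmono
    have := orderEmb_le hk s hs j
    exact Fin.le_def.mpr (by simpa using this)

theorem stmt2 (m : ℕ) (l : Fin m → ℝ) (hl : ∀ i, 0 < l i) (hmono : Monotone l) :
    ∀ k ≤ m, esymmVal m (fun i => (l i) ^ 2) k ≤ topProd m l k * esymmVal m l k := by
  intro k hk
  rw [esymmVal, esymmVal, Finset.mul_sum]
  apply Finset.sum_le_sum
  intro s hs
  have hcard : s.card = k := (Finset.mem_powersetCard.mp hs).2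
  have hpos : 0 ≤ ∏ i ∈ s, l i := Finset.prod_nonneg fun i _ => (hl i).le
  have h1 : ∏ i ∈ s, (l i) ^ 2 = (∏ i ∈ s, l i) * (∏ i ∈ s, l i) := by
    rw [← Finset.prod_mul_distrib]; exact Finset.prod_congr rfl fun i _ => sq (l i)
  rw [h1]
  exact mul_le_mul_of_nonneg_right (prod_le_topProd hk l hl hmono s hcard) hpos
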